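/- arXiv:1711.05293 — 3 statements merged into one kernel-verified Lean document; each statement's English description precedes it below -/
import Mathlib

section
/- Let Γ be a graph labelled by a set S and let ℓ̄(p) ∈ F(S) denote the image in the free group F(S) of the label of a path p. Then for every closed path p in Γ, the element ℓ̄(p) lies in the normal closure in F(S) of the set { ℓ̄(q) : q a simple closed path of Γ }. -/
/-- A graph: vertex set `V`, edge set `E`, initial/terminal vertex maps, and a
fixed-point-free involution on edges swapping initial and terminal vertices. -/
structure LabGraph (V E : Type*) where
  init : E → V
  term : E → V
  inv : E → E
  inv_inv : ∀ e, inv (inv e) = e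
  inv_ne : ∀ e, inv e ≠ e
  init_inv : ∀ e, init (inv e) = term e
  term_inv : ∀ e, term (inv e) = init e

/-- A path: the terminal vertex of each edge is the initial vertex of the next one. -/
def IsPath {V E : Type*} (G : LabGraph V E) (l : List E) : Prop :=
  l.Chain' (fun e f => G.term e = G.init f)

/-- A reduced path contains no subpath of the form `(e, e⁻¹)`. -/
def IsReducedPath {V E : Type*} (G : LabGraph V E) (l : List E) : Prop :=
  l.Chain' (fun e f => f ≠ G.inv e)

/-- A closed path: its initial vertex equals its terminal vertex (the empty path is closed). -/
def IsClosedPath {V E : Type*} (G : LabGraph V E) (l : List E) : Prop :=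
  l.head?.map G.init = l.getLast?.map G.term

/-- One step of deletion of a subpath of the form `(e, e⁻¹)`. -/
def DelStep {V E : Type*} (G : LabGraph V E) (l l' : List E) : Prop :=
  ∃ (a b : List E) (e : E), l = a ++ e :: G.inv e :: b ∧ l' = a ++ b

/-- A path is trivial if it becomes empty after consecutive deletions of subpaths `(e, e⁻¹)`. -/
def IsTrivialPath {V E : Type*} (G : LabGraph V E) (l : List E) : Prop :=
  Relation.ReflTransGen (DelStep G) l []

/-- A simple closed path: a closed, non-trivial path no proper (nonempty) subpath
of which is closed. -/
def IsSimpleClosed {V E : Type*} (G : LabGraph V E) (l : List E) : Prop :=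
  IsPath G l ∧ IsClosedPath G l ∧ ¬ IsTrivialPath G l ∧
    ∀ a m b : List E, l = a ++ m ++ b → m ≠ [] → a ++ b ≠ [] → ¬ IsClosedPath G m

namespace ClosedAux

variable {V E S : Type*} (G : LabGraph V E)

lemma mk_delstep (ℓ : E → S × Bool) (hinv : ∀ e, ℓ (G.inv e) = ((ℓ e).1, !(ℓ e).2))
    {l l' : List E} (h : DelStep G l l') :
    FreeGroup.mk (l.map ℓ) = FreeGroup.mk (l'.map ℓ) := by
  obtain ⟨a, b, e, rfl, rfl⟩ := h
  have h1 : (a ++ e :: G.inv e :: b).map ℓ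
      = a.map ℓ ++ ((ℓ e).1, (ℓ e).2) :: ((ℓ e).1, !(ℓ e).2) :: b.map ℓ := by
    simp [hinv e]
  rw [h1, List.map_append, ← FreeGroup.quot_mk_eq_mk, ← FreeGroup.quot_mk_eq_mk]
  exact Quot.sound FreeGroup.Red.Step.not

lemma mk_trivial (ℓ : E → S × Bool) (hinv : ∀ e, ℓ (G.inv e) = ((ℓ e).1, !(ℓ e).2))
    {l : List E} (h : IsTrivialPath G l) :
    FreeGroup.mk (l.map ℓ) = 1 := by
  have key : ∀ l' : List E, Relation.ReflTransGen (DelStep G) l l' →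
      FreeGroup.mk (l.map ℓ) = FreeGroup.mk (l'.map ℓ) := by
    intro l' h'
    induction h' with
    | refl => rfl
    | tail _ hstep ih => exact ih.trans (mk_delstep G ℓ hinv hstep)
  simpa [FreeGroup.one_eq_mk] using key [] h

lemma closed_ne_nil {l : List E} (h : l ≠ []) :
    IsClosedPath G l ↔ G.init (l.head h) = G.term (l.getLast h) := by
  unfold IsClosedPath
  rw [List.head?_eq_head h, List.getLast?_eq_getLast_of_ne_nil h]
  simp

lemma sub_path {a m b : List E} (hm : m ≠ [])
    (hp : IsPath G (a ++ m ++ b)) (hmcl : IsClosedPath G m) :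
    IsPath G (a ++ b) := by
  rw [IsPath, List.Chain', List.append_assoc, List.isChain_append] at hp
  obtain ⟨ca, hmb, hlink⟩ := hp
  rw [List.isChain_append] at hmb
  obtain ⟨cm, cb, hlink2⟩ := hmb
  rw [IsPath, List.Chain', List.isChain_append]
  refine ⟨ca, cb, fun x hx y hy => ?_⟩
  have h1 : G.term x = G.init (m.head hm) :=
    hlink x hx _ (by simp [List.head?_append_of_ne_nil _ hm, List.head?_eq_head hm])
  have h2 : G.term (m.getLast hm) = G.init y :=
    hlink2 _ (by simp [List.getLast?_eq_getLast_of_ne_nil hm]) y hy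
  have hc := (closed_ne_nil G hm).mp hmcl
  exact h1.trans (hc.trans h2)

lemma sub_closed {a m b : List E} (hm : m ≠ [])
    (hp : IsPath G (a ++ m ++ b)) (hcl : IsClosedPath G (a ++ m ++ b))
    (hmcl : IsClosedPath G m) :
    IsClosedPath G (a ++ b) := by
  have hc := (closed_ne_nil G hm).mp hmcl
  rcases eq_or_ne a [] with rfl | ha
  · rcases eq_or_ne b [] with rfl | hb
    · simp [IsClosedPath]
    · simp only [List.nil_append] at hp hcl ⊢
      rw [IsClosedPath, List.head?_append_of_ne_nil _ hm,
        List.getLast?_append_of_ne_nil _ hb, List.head?_eq_head hm,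
        List.getLast?_eq_getLast_of_ne_nil hb] at hcl
      simp only [Option.map_some, Option.some.injEq] at hcl
      have hlink2 : G.term (m.getLast hm) = G.init (b.head hb) := by
        rw [IsPath, List.Chain', List.isChain_append] at hp
        exact hp.2.2 _ (by simp [List.getLast?_eq_getLast_of_ne_nil hm]) _
          (by simp [List.head?_eq_head hb])
      rw [closed_ne_nil G hb]
      rw [← hlink2, ← hc, hcl]
  · rcases eq_or_ne b [] with rfl | hb
    · simp only [List.append_nil] at hp hcl ⊢
      rw [IsClosedPath, List.head?_append_of_ne_nil _ ha,
        List.getLast?_append_of_ne_nil _ hm, List.head?_eq_head ha,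
        List.getLast?_eq_getLast_of_ne_nil hm] at hcl
      simp only [Option.map_some, Option.some.injEq] at hcl
      have hlink1 : G.term (a.getLast ha) = G.init (m.head hm) := by
        rw [IsPath, List.Chain', List.isChain_append] at hp
        exact hp.2.2 _ (by simp [List.getLast?_eq_getLast_of_ne_nil ha]) _
          (by simp [List.head?_eq_head hm])
      rw [closed_ne_nil G ha]
      rw [hcl, ← hc, ← hlink1]
    · have ham : a ++ m ≠ [] := by simp [ha]
      rw [IsClosedPath, List.head?_append_of_ne_nil _ ham,
        List.getLast?_append_of_ne_nil _ hb, List.head?_append_of_ne_nil _ ha] at hcl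
      rw [IsClosedPath, List.head?_append_of_ne_nil _ ha,
        List.getLast?_append_of_ne_nil _ hb]
      exact hcl

end ClosedAux

/-- The label of a closed path, as an element of the free group `F(S)`, lies in the
normal closure of the set of labels of simple closed paths. Here the label of a path
`(e₁, …, eₙ)` is the element `FreeGroup.mk [ℓ e₁, …, ℓ eₙ]` of `F(S)`, the alphabet
`S ⊔ S⁻¹` being modelled as `S × Bool`. -/
theorem closed_path_label_mem_normalClosure {V E S : Type*} (G : LabGraph V E)
    (ℓ : E → S × Bool)
    (hinv : ∀ e, ℓ (G.inv e) = ((ℓ e).1, !(ℓ e).2))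
    (p : List E) (hp : IsPath G p) (hcl : IsClosedPath G p) :
    FreeGroup.mk (p.map ℓ) ∈ Subgroup.normalClosure
      {x : FreeGroup S | ∃ q : List E, IsSimpleClosed G q ∧ x = FreeGroup.mk (q.map ℓ)} := by
  classical
  suffices H : ∀ n (p : List E), p.length = n → IsPath G p → IsClosedPath G p →
      FreeGroup.mk (p.map ℓ) ∈ Subgroup.normalClosure
        {x : FreeGroup S | ∃ q : List E, IsSimpleClosed G q ∧ x = FreeGroup.mk (q.map ℓ)} from
    H p.length p rfl hp hcl
  intro n
  induction n using Nat.strong_induction_on with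
  | _ n ih =>
    intro p hlen hp hcl
    by_cases htriv : IsTrivialPath G p
    · rw [ClosedAux.mk_trivial G ℓ hinv htriv]
      exact Subgroup.one_mem _
    by_cases hsub : ∃ a m b : List E, p = a ++ m ++ b ∧ m ≠ [] ∧ a ++ b ≠ [] ∧ IsClosedPath G m
    · obtain ⟨a, m, b, rfl, hm, hab, hmcl⟩ := hsub
      have hpm : IsPath G m := by
        have h := hp
        rw [IsPath, List.Chain', List.append_assoc, List.isChain_append] at h
        exact (List.isChain_append.mp h.2.1).1
      have hpab : IsPath G (a ++ b) := ClosedAux.sub_path G hm hp hmcl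
      have hclab : IsClosedPath G (a ++ b) := ClosedAux.sub_closed G hm hp hcl hmcl
      have hposab : 0 < a.length + b.length := by
        have := List.length_pos_iff.mpr hab
        simpa using this
      have hposm : 0 < m.length := List.length_pos_iff.mpr hm
      have h1 : FreeGroup.mk (m.map ℓ) ∈ Subgroup.normalClosure
          {x : FreeGroup S | ∃ q : List E, IsSimpleClosed G q ∧ x = FreeGroup.mk (q.map ℓ)} :=
        ih m.length (by rw [← hlen]; simp; omega) m rfl hpm hmcl
      have h2 : FreeGroup.mk ((a ++ b).map ℓ) ∈ Subgroup.normalClosure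
          {x : FreeGroup S | ∃ q : List E, IsSimpleClosed G q ∧ x = FreeGroup.mk (q.map ℓ)} :=
        ih (a ++ b).length (by rw [← hlen]; simp; omega) (a ++ b) rfl hpab hclab
      have key : FreeGroup.mk ((a ++ m ++ b).map ℓ)
          = (FreeGroup.mk (a.map ℓ) * FreeGroup.mk (m.map ℓ) * (FreeGroup.mk (a.map ℓ))⁻¹)
            * FreeGroup.mk ((a ++ b).map ℓ) := by
        simp only [List.map_append, ← FreeGroup.mul_mk]
        group
      rw [key]
      exact Subgroup.mul_mem _
        ((Subgroup.normalClosure_normal).conj_mem _ h1 _) h2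
    · push_neg at hsub
      exact Subgroup.subset_normalClosure
        ⟨p, ⟨hp, hcl, htriv, fun a m b h1 h2 h3 => hsub a m b h1 h2 h3⟩, rfl⟩
end

section
/- Let Γ be a graph labelled by a set S, let R_c = { ℓ̄(p) : p a closed path of Γ } ⊆ F(S) and R_s = { ℓ̄(q) : q a simple closed path of Γ } ⊆ F(S). Then the normal closure of R_c in the free group F(S) equals the normal closure of R_s in F(S); consequently the presentations ⟨S ∣ R_c⟩ and ⟨S ∣ R_s⟩ define the same group (the quotients F(S)/⟪R_c⟫ and F(S)/⟪R_s⟫ coincide). -/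
section
variable {V E : Type*} (G : LabGraph V E)

lemma splice {a m b : List E} (hp : IsPath G (a ++ m ++ b))
    (hc : IsClosedPath G (a ++ m ++ b)) (hm : IsClosedPath G m) (hm0 : m ≠ []) :
    IsPath G (a ++ b) ∧ IsClosedPath G (a ++ b) := by
  unfold IsPath at hp ⊢
  rw [IsClosedPath, List.append_assoc] at hc
  rw [List.append_assoc] at hp
  obtain ⟨ha, hmb, hlink1⟩ := List.isChain_append.1 hp
  obtain ⟨hmch, hb, hlink2⟩ := List.isChain_append.1 hmb
  have hmc : G.init (m.head hm0) = G.term (m.getLast hm0) := by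
    have := hm
    rw [IsClosedPath, List.head?_eq_head hm0, List.getLast?_eq_getLast (l := m) hm0] at this
    simpa using this
  have link : ∀ x ∈ a.getLast?, ∀ y ∈ b.head?, G.term x = G.init y := by
    intro x hx y hy
    have h1 := hlink1 x hx (m.head hm0)
      (by simp [List.head?_append, List.head?_eq_head hm0])
    have h2 := hlink2 (m.getLast hm0) (by simp [List.getLast?_eq_getLast (l := m) hm0]) y hy
    exact h1.trans (hmc.trans h2)
  refine ⟨List.isChain_append.2 ⟨ha, hb, link⟩, ?_⟩
  by_cases ha0 : a = []
  · by_cases hb0 : b = []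
    · subst ha0; subst hb0; rfl
    · subst ha0
      simp only [List.nil_append] at hc ⊢
      rw [List.head?_append, List.head?_eq_head hm0, List.getLast?_append,
        List.getLast?_eq_getLast (l := b) hb0] at hc
      have h2 := hlink2 (m.getLast hm0) (by simp [List.getLast?_eq_getLast (l := m) hm0])
        (b.head hb0) (by simp [List.head?_eq_head hb0])
      rw [IsClosedPath, List.head?_eq_head hb0, List.getLast?_eq_getLast (l := b) hb0]
      simp only [Option.map_some, Option.or_some] at hc ⊢
      rw [← h2, ← hmc]
      simpa using hc
  · by_cases hb0 : b = []
    · subst hb0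
      simp only [List.append_nil] at hc ⊢
      rw [List.head?_append, List.head?_eq_head ha0, List.getLast?_append,
        List.getLast?_eq_getLast (l := m) hm0] at hc
      have h1 := hlink1 (a.getLast ha0) (by simp [List.getLast?_eq_getLast (l := a) ha0])
        (m.head hm0) (by simp [List.head?_append, List.head?_eq_head hm0])
      rw [IsClosedPath, List.head?_eq_head ha0, List.getLast?_eq_getLast (l := a) ha0]
      simp only [Option.map_some, Option.or_some] at hc ⊢
      rw [h1, hmc]
      simpa using hc
    · rw [List.head?_append, List.head?_eq_head ha0, List.getLast?_append,
        List.getLast?_append, List.getLast?_eq_getLast (l := b) hb0] at hc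
      rw [IsClosedPath, List.head?_append, List.head?_eq_head ha0, List.getLast?_append,
        List.getLast?_eq_getLast (l := b) hb0]
      simpa using hc

end

section main
variable {V E S : Type*} (G : LabGraph V E) (ℓ : E → S × Bool)

lemma mk_pair_cancel (x : S × Bool) : FreeGroup.mk [x, (x.1, !x.2)] = (1 : FreeGroup S) := by
  have h : ([x, (x.1, !x.2)] : List (S × Bool)) = [x] ++ FreeGroup.invRev [x] := by
    simp [FreeGroup.invRev]
  rw [h, ← FreeGroup.mul_mk, ← FreeGroup.inv_mk, mul_inv_cancel]

lemma mem_ncl (hinv : ∀ e, ℓ (G.inv e) = ((ℓ e).1, !(ℓ e).2)) :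
    ∀ n (p : List E), p.length = n → IsPath G p → IsClosedPath G p →
      FreeGroup.mk (p.map ℓ) ∈
        Subgroup.normalClosure {x : FreeGroup S | ∃ q : List E, IsSimpleClosed G q ∧
          x = FreeGroup.mk (q.map ℓ)} := by
  intro n
  induction n using Nat.strong_induction_on with
  | _ n IH =>
  intro p hlen hp hc
  rcases eq_or_ne p [] with rfl | hp0
  · rw [List.map_nil, ← FreeGroup.one_eq_mk]
    exact Subgroup.one_mem _
  by_cases hcanc : ∃ (a b : List E) (e : E), p = a ++ e :: G.inv e :: b
  · obtain ⟨a, b, e, rfl⟩ := hcanc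
    have heq2 : a ++ e :: G.inv e :: b = a ++ [e, G.inv e] ++ b := by simp
    rw [heq2] at hp hc
    have hm : IsClosedPath G [e, G.inv e] := by
      simp [IsClosedPath, G.term_inv]
    obtain ⟨hp', hc'⟩ := splice G hp hc hm (by simp)
    have hlt : (a ++ b).length < n := by
      subst hlen; simp
    have hmem := IH _ hlt (a ++ b) rfl hp' hc'
    have hmk : FreeGroup.mk ((a ++ [e, G.inv e] ++ b).map ℓ) =
        FreeGroup.mk ((a ++ b).map ℓ) := by
      simp only [List.map_append, List.map_cons, List.map_nil, ← FreeGroup.mul_mk]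
      rw [show ([ℓ e, ℓ (G.inv e)] : List (S × Bool)) = [ℓ e, ((ℓ e).1, !(ℓ e).2)] by
        rw [hinv], mk_pair_cancel, mul_one]
    rw [heq2, hmk]
    exact hmem
  by_cases hsub : ∃ a m b : List E, p = a ++ m ++ b ∧ m ≠ [] ∧ a ++ b ≠ [] ∧ IsClosedPath G m
  · obtain ⟨a, m, b, rfl, hm0, hab0, hmcl⟩ := hsub
    obtain ⟨hp', hc'⟩ := splice G hp hc hmcl hm0
    have hmpath : IsPath G m := by
      have := hp
      rw [IsPath, List.Chain', List.append_assoc, List.isChain_append] at this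
      exact (List.isChain_append.1 this.2.1).1
    have hm0' : m.length ≠ 0 := fun h => hm0 (List.length_eq_zero_iff.1 h)
    have hab0' : (a ++ b).length ≠ 0 := fun h => hab0 (List.length_eq_zero_iff.1 h)
    have hab1 : 0 < a.length + b.length := by
      have := Nat.pos_of_ne_zero hab0'
      simpa using this
    have hm1 : 0 < m.length := Nat.pos_of_ne_zero hm0'
    have hlt1 : m.length < n := by
      subst hlen; simp only [List.length_append]; omega
    have hlt2 : (a ++ b).length < n := by
      subst hlen; simp only [List.length_append]; omega
    have h1 := IH _ hlt1 m rfl hmpath hmcl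
    have h2 := IH _ hlt2 (a ++ b) rfl hp' hc'
    have heq : FreeGroup.mk ((a ++ m ++ b).map ℓ) =
        (FreeGroup.mk (a.map ℓ) * FreeGroup.mk (m.map ℓ) * (FreeGroup.mk (a.map ℓ))⁻¹) *
          FreeGroup.mk ((a ++ b).map ℓ) := by
      simp only [List.map_append, ← FreeGroup.mul_mk]
      group
    rw [heq]
    exact Subgroup.mul_mem _
      (Subgroup.normalClosure_normal.conj_mem _ h1 _) h2
  · refine Subgroup.subset_normalClosure ⟨p, ⟨hp, hc, ?_, ?_⟩, rfl⟩
    · intro ht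
      rcases Relation.ReflTransGen.cases_head ht with heq | ⟨l', hstep, _⟩
      · exact hp0 heq
      · obtain ⟨a, b, e, hpe, _⟩ := hstep
        exact hcanc ⟨a, b, e, hpe⟩
    · intro a m b heq hm0 hab0 hmc
      exact hsub ⟨a, m, b, heq, hm0, hab0, hmc⟩

end main

/-- The normal closure in `F(S)` of the set `R_c` of labels of all closed paths of `Γ`
equals the normal closure of the set `R_s` of labels of all simple closed paths;
consequently the quotients `F(S)/⟪R_c⟫` and `F(S)/⟪R_s⟫` coincide. -/
theorem normalClosure_closed_eq_normalClosure_simpleClosed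
    {V E S : Type*} (G : LabGraph V E) (ℓ : E → S × Bool)
    (hinv : ∀ e, ℓ (G.inv e) = ((ℓ e).1, !(ℓ e).2)) :
    Subgroup.normalClosure
        {x : FreeGroup S | ∃ p : List E, IsPath G p ∧ IsClosedPath G p ∧
          x = FreeGroup.mk (p.map ℓ)} =
      Subgroup.normalClosure
        {x : FreeGroup S | ∃ q : List E, IsSimpleClosed G q ∧ x = FreeGroup.mk (q.map ℓ)} ∧
    (FreeGroup S ⧸ Subgroup.normalClosure
        {x : FreeGroup S | ∃ p : List E, IsPath G p ∧ IsClosedPath G p ∧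
          x = FreeGroup.mk (p.map ℓ)}) =
      (FreeGroup S ⧸ Subgroup.normalClosure
        {x : FreeGroup S | ∃ q : List E, IsSimpleClosed G q ∧ x = FreeGroup.mk (q.map ℓ)}) := by
  have h : Subgroup.normalClosure
        {x : FreeGroup S | ∃ p : List E, IsPath G p ∧ IsClosedPath G p ∧
          x = FreeGroup.mk (p.map ℓ)} =
      Subgroup.normalClosure
        {x : FreeGroup S | ∃ q : List E, IsSimpleClosed G q ∧ x = FreeGroup.mk (q.map ℓ)} := by
    apply le_antisymm
    · apply Subgroup.normalClosure_le_normal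
      rintro x ⟨p, hp, hc, rfl⟩
      exact mem_ncl G ℓ hinv p.length p rfl hp hc
    · exact Subgroup.normalClosure_mono fun x ⟨q, hq, hx⟩ => ⟨q, hq.1, hq.2.1, hx⟩
  exact ⟨h, by rw [h]⟩
end

section
/- Let Γ be a connected graph labelled by a set S, let v₀ be a vertex, and let T ⊆ E be a spanning tree of Γ, i.e., T is closed under the edge involution, the subgraph (V, T) is connected, and (V, T) contains no nonempty reduced closed path. For each vertex u let t_u denote the unique reduced path in T from v₀ to u. Then the normal closure in F(S) of { ℓ̄(p) : p a closed path of Γ } equals the normal closure in F(S) of { ℓ̄(t_{α(e)} · e · (t_{ω(e)})⁻¹) : e ∈ E \ T }. (This shows that the group defined by Γ is presented by the labels of a free basis of the fundamental group of Γ.) -/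
/-- `HasEnds G l x y` : the path `l` goes from vertex `x` to vertex `y`
(an empty path goes from a vertex to itself). -/
def HasEnds {V E : Type*} (G : LabGraph V E) (l : List E) (x y : V) : Prop :=
  (l = [] → x = y) ∧
    ∀ h : l ≠ [], G.init (l.head h) = x ∧ G.term (l.getLast h) = y

namespace LabAux

variable {V E S : Type*}

def Walk (G : LabGraph V E) : List E → V → V → Prop
  | [], x, y => x = y
  | e :: l, x, y => G.init e = x ∧ Walk G l (G.term e) y

@[simp] lemma walk_nil_iff (G : LabGraph V E) (x y : V) : Walk G [] x y ↔ x = y := Iff.rfl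
@[simp] lemma walk_cons_iff (G : LabGraph V E) (e : E) (l : List E) (x y : V) :
    Walk G (e :: l) x y ↔ G.init e = x ∧ Walk G l (G.term e) y := Iff.rfl

lemma walk_isPath (G : LabGraph V E) {l : List E} {x y : V} (h : Walk G l x y) :
    IsPath G l := by
  induction l generalizing x with
  | nil => exact List.isChain_nil
  | cons e l ih =>
    obtain ⟨he, hw⟩ := h
    rw [IsPath, List.Chain', List.isChain_cons]
    refine ⟨?_, ih hw⟩
    intro f hf
    cases l with
    | nil => simp at hf
    | cons g l' => simp at hf; subst hf; exact hw.1.symm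

lemma walk_append (G : LabGraph V E) {l₁ l₂ : List E} {x y z : V}
    (h1 : Walk G l₁ x y) (h2 : Walk G l₂ y z) : Walk G (l₁ ++ l₂) x z := by
  induction l₁ generalizing x with
  | nil => have hxy : x = y := h1; subst hxy; simpa using h2
  | cons e l ih => exact ⟨h1.1, ih h1.2⟩

lemma walk_append_split (G : LabGraph V E) {l₁ l₂ : List E} {x z : V}
    (h : Walk G (l₁ ++ l₂) x z) : ∃ y, Walk G l₁ x y ∧ Walk G l₂ y z := by
  induction l₁ generalizing x with
  | nil => exact ⟨x, rfl, h⟩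
  | cons e l ih =>
    obtain ⟨y, h1, h2⟩ := ih h.2
    exact ⟨y, ⟨h.1, h1⟩, h2⟩

lemma walk_getLast (G : LabGraph V E) {l : List E} {x y : V} (h : Walk G l x y)
    (hne : l ≠ []) : G.term (l.getLast hne) = y := by
  induction l generalizing x with
  | nil => exact absurd rfl hne
  | cons e l ih =>
    cases l with
    | nil => exact h.2
    | cons f l' => rw [List.getLast_cons (List.cons_ne_nil f l')]; exact ih h.2 _

lemma walk_closed (G : LabGraph V E) {l : List E} {x : V} (h : Walk G l x x) :
    IsClosedPath G l := by
  cases l with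
  | nil => rfl
  | cons e l' =>
    have h1 : G.init e = x := h.1
    have h2 := walk_getLast G h (List.cons_ne_nil e l')
    rw [IsClosedPath, List.head?_cons,
      List.getLast?_eq_getLast (List.cons_ne_nil e l')]
    simp [h1, h2]

lemma walk_of_ends (G : LabGraph V E) {l : List E} {x y : V} (hp : IsPath G l)
    (he : HasEnds G l x y) : Walk G l x y := by
  induction l generalizing x with
  | nil => exact he.1 rfl
  | cons e l ih =>
    have hne : (e :: l) ≠ [] := List.cons_ne_nil e l
    obtain ⟨hh, hl⟩ := he.2 hne
    rw [IsPath, List.Chain', List.isChain_cons] at hp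
    refine ⟨by simpa using hh, ?_⟩
    apply ih hp.2
    constructor
    · intro h0; subst h0; simpa using hl
    · intro h0
      constructor
      · have := hp.1 (l.head h0) (by simp [List.head?_eq_head h0])
        exact this.symm
      · rw [List.getLast_cons h0] at hl; exact hl

lemma walk_inv (G : LabGraph V E) {l : List E} {x y : V} (h : Walk G l x y) :
    Walk G (l.reverse.map G.inv) y x := by
  induction l generalizing x with
  | nil => have hxy : x = y := h; subst hxy; rfl
  | cons e l ih =>
    rw [List.reverse_cons, List.map_append]
    refine walk_append G (ih h.2) ?_
    exact ⟨G.init_inv e, (G.term_inv e).trans h.1⟩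

lemma reduced_inv (G : LabGraph V E) {l : List E} (h : IsReducedPath G l) :
    IsReducedPath G (l.reverse.map G.inv) := by
  rw [IsReducedPath, List.map_reverse, List.Chain', List.isChain_reverse, List.isChain_map]
  refine h.imp ?_
  intro a b hab
  simp only [flip, G.inv_inv]
  exact fun hc => hab hc.symm

lemma delstep_walk (G : LabGraph V E) {l l' : List E} {x y : V}
    (h : DelStep G l l') (hw : Walk G l x y) : Walk G l' x y := by
  obtain ⟨a, b, e, rfl, rfl⟩ := h
  obtain ⟨u, ha, hrest⟩ := walk_append_split G hw
  refine walk_append G ha ?_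
  have hb : Walk G b (G.term (G.inv e)) y := hrest.2.2
  rw [G.term_inv, hrest.1] at hb
  exact hb

lemma delstep_cons (G : LabGraph V E) {l l' : List E} (e : E) (h : DelStep G l l') :
    DelStep G (e :: l) (e :: l') := by
  obtain ⟨a, b, f, rfl, rfl⟩ := h
  exact ⟨e :: a, b, f, rfl, rfl⟩

lemma exists_reduced (G : LabGraph V E) (l : List E) :
    ∃ r, Relation.ReflTransGen (DelStep G) l r ∧ IsReducedPath G r := by
  induction l with
  | nil => exact ⟨[], Relation.ReflTransGen.refl, List.isChain_nil⟩
  | cons e l ih =>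
    obtain ⟨r, hr, hred⟩ := ih
    have hlift : Relation.ReflTransGen (DelStep G) (e :: l) (e :: r) :=
      Relation.ReflTransGen.lift (e :: ·) (fun a b h => delstep_cons G e h) _ _ hr
    cases r with
    | nil => exact ⟨[e], hlift, List.isChain_singleton e⟩
    | cons f r' =>
      by_cases hef : f = G.inv e
      · subst hef
        refine ⟨r', hlift.tail ⟨[], r', e, rfl, rfl⟩, hred.tail⟩
      · exact ⟨e :: f :: r', hlift, List.isChain_cons_cons.mpr ⟨hef, hred⟩⟩

lemma rtg_walk (G : LabGraph V E) {l l' : List E} {x y : V}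
    (h : Relation.ReflTransGen (DelStep G) l l') (hw : Walk G l x y) : Walk G l' x y := by
  induction h with
  | refl => exact hw
  | tail _ hstep ih => exact delstep_walk G hstep ih

lemma rtg_subset (G : LabGraph V E) {T : Set E} {l l' : List E}
    (h : Relation.ReflTransGen (DelStep G) l l') (hT : ∀ e ∈ l, e ∈ T) :
    ∀ e ∈ l', e ∈ T := by
  induction h with
  | refl => exact hT
  | tail _ hstep ih =>
    obtain ⟨a, b, e, rfl, rfl⟩ := hstep
    intro f hf
    apply ih
    simp only [List.mem_append, List.mem_cons] at hf ⊢
    tauto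

lemma delstep_label (G : LabGraph V E) (ℓ : E → S × Bool)
    (hinv : ∀ e, ℓ (G.inv e) = ((ℓ e).1, !(ℓ e).2)) {l l' : List E}
    (h : DelStep G l l') : FreeGroup.mk (l.map ℓ) = FreeGroup.mk (l'.map ℓ) := by
  obtain ⟨a, b, e, rfl, rfl⟩ := h
  have hr := Quot.sound (@FreeGroup.Red.Step.not S (a.map ℓ) (b.map ℓ) (ℓ e).1 (ℓ e).2)
  simp only [List.map_append, List.map_cons, hinv e]; exact hr

lemma rtg_label (G : LabGraph V E) (ℓ : E → S × Bool)
    (hinv : ∀ e, ℓ (G.inv e) = ((ℓ e).1, !(ℓ e).2)) {l l' : List E}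
    (h : Relation.ReflTransGen (DelStep G) l l') :
    FreeGroup.mk (l.map ℓ) = FreeGroup.mk (l'.map ℓ) := by
  induction h with
  | refl => rfl
  | tail _ hstep ih => exact ih.trans (delstep_label G ℓ hinv hstep)

lemma label_inv (G : LabGraph V E) (ℓ : E → S × Bool)
    (hinv : ∀ e, ℓ (G.inv e) = ((ℓ e).1, !(ℓ e).2)) (l : List E) :
    FreeGroup.mk ((l.reverse.map G.inv).map ℓ) = (FreeGroup.mk (l.map ℓ))⁻¹ := by
  rw [FreeGroup.inv_mk]
  congr 1
  simp only [FreeGroup.invRev, List.map_reverse, List.map_map]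
  congr 1
  apply List.map_congr_left
  intro e _
  simp [hinv e]

lemma uniq_reduced (G : LabGraph V E) (T : Set E)
    (hTinv : ∀ e ∈ T, G.inv e ∈ T)
    (hTtree : ∀ p : List E, IsPath G p → (∀ e ∈ p, e ∈ T) → IsReducedPath G p →
      IsClosedPath G p → p = []) :
    ∀ (p q : List E) (x y : V), Walk G p x y → Walk G q x y →
      (∀ e ∈ p, e ∈ T) → (∀ e ∈ q, e ∈ T) →
      IsReducedPath G p → IsReducedPath G q → p = q := by
  intro p
  induction p with
  | nil =>
    intro q x y hp hq _ hqT _ hqr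
    have hxy : x = y := hp
    subst hxy
    exact (hTtree q (walk_isPath G hq) hqT hqr (walk_closed G hq)).symm
  | cons e p ih =>
    intro q x y hp hq hpT hqT hpr hqr
    cases q with
    | nil =>
      have hxy : x = y := hq
      subst hxy
      have := hTtree (e :: p) (walk_isPath G hp) hpT hpr (walk_closed G hp)
      simp at this
    | cons f q' =>
      by_cases hef : e = f
      · subst hef
        have htail := ih q' (G.term e) y hp.2 hq.2
          (fun g hg => hpT g (List.mem_cons_of_mem e hg))
          (fun g hg => hqT g (List.mem_cons_of_mem e hg)) hpr.tail hqr.tail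
        rw [htail]
      · exfalso
        set c := ((e :: p).reverse.map G.inv) ++ (f :: q') with hc
        have hcw : Walk G c y y := walk_append G (walk_inv G hp) hq
        have hcT : ∀ g ∈ c, g ∈ T := by
          intro g hg
          rw [hc, List.mem_append] at hg
          rcases hg with hg | hg
          · rw [List.mem_map] at hg
            obtain ⟨h, hh, rfl⟩ := hg
            exact hTinv h (hpT h (List.mem_reverse.mp hh))
          · exact hqT g hg
        have hcr : IsReducedPath G c := by
          rw [hc, IsReducedPath, List.Chain', List.isChain_append]
          refine ⟨reduced_inv G hpr, hqr, ?_⟩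
          intro a ha b hb
          have hlast : ((e :: p).reverse.map G.inv).getLast? = some (G.inv e) := by
            rw [List.getLast?_map, List.getLast?_reverse]
            rfl
          rw [hlast, Option.mem_some_iff] at ha
          rw [List.head?_cons, Option.mem_some_iff] at hb
          subst ha; subst hb
          rw [G.inv_inv]
          exact fun h => hef h.symm
        have := hTtree c (walk_isPath G hcw) hcT hcr (walk_closed G hcw)
        simp [hc] at this

end LabAux

namespace LabAux

variable {V E S : Type*}

lemma tree_step (G : LabGraph V E) (ℓ : E → S × Bool)
    (hinv : ∀ e, ℓ (G.inv e) = ((ℓ e).1, !(ℓ e).2))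
    (v₀ : V) (T : Set E)
    (hTinv : ∀ e ∈ T, G.inv e ∈ T)
    (hTtree : ∀ p : List E, IsPath G p → (∀ e ∈ p, e ∈ T) → IsReducedPath G p →
      IsClosedPath G p → p = [])
    (t : V → List E)
    (htw : ∀ u : V, Walk G (t u) v₀ u)
    (htT : ∀ u : V, ∀ e ∈ t u, e ∈ T)
    (htr : ∀ u : V, IsReducedPath G (t u))
    (e : E) (heT : e ∈ T) :
    FreeGroup.mk ((t (G.init e)).map ℓ) * FreeGroup.mk [ℓ e] =
      FreeGroup.mk ((t (G.term e)).map ℓ) := by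
  set p := t (G.init e) ++ [e] with hp
  have hw : Walk G p v₀ (G.term e) :=
    walk_append G (htw (G.init e)) ⟨rfl, rfl⟩
  obtain ⟨r, hr, hred⟩ := exists_reduced G p
  have hwr : Walk G r v₀ (G.term e) := rtg_walk G hr hw
  have hrT : ∀ g ∈ r, g ∈ T := by
    refine rtg_subset G hr ?_
    intro g hg
    rw [hp, List.mem_append, List.mem_singleton] at hg
    rcases hg with hg | rfl
    · exact htT _ g hg
    · exact heT
  have hre : r = t (G.term e) :=
    uniq_reduced G T hTinv hTtree r (t (G.term e)) v₀ (G.term e) hwr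
      (htw (G.term e)) hrT (htT _) hred (htr _)
  calc FreeGroup.mk ((t (G.init e)).map ℓ) * FreeGroup.mk [ℓ e]
      = FreeGroup.mk (p.map ℓ) := by rw [FreeGroup.mul_mk, hp, List.map_append]; rfl
    _ = FreeGroup.mk (r.map ℓ) := rtg_label G ℓ hinv hr
    _ = _ := by rw [hre]

lemma telescope (G : LabGraph V E) (ℓ : E → S × Bool) (t : V → List E) :
    ∀ (p : List E) (x y : V), Walk G p x y →
      FreeGroup.mk ((t x).map ℓ) * FreeGroup.mk (p.map ℓ) *
          (FreeGroup.mk ((t y).map ℓ))⁻¹ =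
        (p.map fun e => FreeGroup.mk ((t (G.init e)).map ℓ) * FreeGroup.mk [ℓ e] *
          (FreeGroup.mk ((t (G.term e)).map ℓ))⁻¹).prod := by
  intro p
  induction p with
  | nil =>
    intro x y hw
    have hxy : x = y := hw
    subst hxy
    simp only [List.map_nil, List.prod_nil, ← FreeGroup.one_eq_mk, mul_one]
    group
  | cons e p ih =>
    intro x y hw
    obtain ⟨he, hw'⟩ := hw
    subst he
    simp only [List.map_cons, List.prod_cons]
    rw [← ih (G.term e) y hw',
      show FreeGroup.mk (ℓ e :: List.map ℓ p) = FreeGroup.mk [ℓ e] * FreeGroup.mk (p.map ℓ)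
        from rfl]
    group

end LabAux


/-- Let `Γ` be a connected labelled graph, `v₀` a vertex and `T` a spanning tree
(closed under the edge involution, connecting all vertices, containing no nonempty
reduced closed path), and for each vertex `u` let `t u` be the (unique) reduced path
in `T` from `v₀` to `u`. Then the normal closure in `F(S)` of the labels of all closed
paths of `Γ` equals the normal closure of the elements
`ℓ̄(t (α e)) · ℓ(e) · ℓ̄(t (ω e))⁻¹` for the edges `e ∉ T`. -/
theorem normalClosure_closed_eq_normalClosure_basis
    {V E S : Type*} (G : LabGraph V E) (ℓ : E → S × Bool)
    (hinv : ∀ e, ℓ (G.inv e) = ((ℓ e).1, !(ℓ e).2))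
    (hconn : ∀ u v : V, ∃ p : List E, IsPath G p ∧ HasEnds G p u v)
    (v₀ : V) (T : Set E)
    (hTinv : ∀ e ∈ T, G.inv e ∈ T)
    (hTconn : ∀ u v : V, ∃ p : List E, IsPath G p ∧ (∀ e ∈ p, e ∈ T) ∧ HasEnds G p u v)
    (hTtree : ∀ p : List E, IsPath G p → (∀ e ∈ p, e ∈ T) → IsReducedPath G p →
      IsClosedPath G p → p = [])
    (t : V → List E)
    (ht : ∀ u : V, IsPath G (t u) ∧ (∀ e ∈ t u, e ∈ T) ∧ IsReducedPath G (t u) ∧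
      HasEnds G (t u) v₀ u) :
    Subgroup.normalClosure
        {x : FreeGroup S | ∃ p : List E, IsPath G p ∧ IsClosedPath G p ∧
          x = FreeGroup.mk (p.map ℓ)} =
      Subgroup.normalClosure
        {x : FreeGroup S | ∃ e : E, e ∉ T ∧
          x = FreeGroup.mk ((t (G.init e)).map ℓ) * FreeGroup.mk [ℓ e] *
            (FreeGroup.mk ((t (G.term e)).map ℓ))⁻¹} := by
    open LabAux in
  have htw : ∀ u : V, Walk G (t u) v₀ u := fun u =>
    walk_of_ends G (ht u).1 (ht u).2.2.2
  set g : E → FreeGroup S := fun e =>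
    FreeGroup.mk ((t (G.init e)).map ℓ) * FreeGroup.mk [ℓ e] *
      (FreeGroup.mk ((t (G.term e)).map ℓ))⁻¹ with hg
  apply le_antisymm
  · apply Subgroup.normalClosure_le_normal
    rintro x ⟨p, hp, hc, rfl⟩
    rcases eq_or_ne p [] with rfl | hne
    · simpa [← FreeGroup.one_eq_mk] using Subgroup.one_mem _
    · set x0 := G.init (p.head hne) with hx0
      have hw : Walk G p x0 x0 := by
        apply walk_of_ends G hp
        refine ⟨fun h => absurd h hne, fun h => ⟨rfl, ?_⟩⟩
        have := hc
        rw [IsClosedPath, List.head?_eq_head hne, List.getLast?_eq_getLast hne] at this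
        simpa using this.symm
      have hprod : FreeGroup.mk (p.map ℓ) =
          (FreeGroup.mk ((t x0).map ℓ))⁻¹ * ((p.map g).prod) *
            ((FreeGroup.mk ((t x0).map ℓ))⁻¹)⁻¹ := by
        rw [← telescope G ℓ t p x0 x0 hw]
        group
      rw [hprod]
      refine Subgroup.normalClosure_normal.conj_mem _ ?_ _
      apply Subgroup.list_prod_mem
      intro a ha
      rw [List.mem_map] at ha
      obtain ⟨e, _, rfl⟩ := ha
      by_cases heT : e ∈ T
      · have h1 : FreeGroup.mk ((t (G.init e)).map ℓ) * FreeGroup.mk [ℓ e] *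
            (FreeGroup.mk ((t (G.term e)).map ℓ))⁻¹ = 1 := by
          rw [tree_step G ℓ hinv v₀ T hTinv hTtree t htw (fun u => (ht u).2.1)
            (fun u => (ht u).2.2.1) e heT]
          group
        have h2 : g e = 1 := h1
        rw [h2]; exact Subgroup.one_mem _
      · exact Subgroup.subset_normalClosure ⟨e, heT, rfl⟩
  · apply Subgroup.normalClosure_le_normal
    rintro x ⟨e, heT, rfl⟩
    apply Subgroup.subset_normalClosure
    refine ⟨t (G.init e) ++ e :: ((t (G.term e)).reverse.map G.inv), ?_, ?_, ?_⟩
    · have hw : Walk G (t (G.init e) ++ e :: ((t (G.term e)).reverse.map G.inv)) v₀ v₀ :=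
        walk_append G (htw (G.init e)) ⟨rfl, walk_inv G (htw (G.term e))⟩
      exact walk_isPath G hw
    · have hw : Walk G (t (G.init e) ++ e :: ((t (G.term e)).reverse.map G.inv)) v₀ v₀ :=
        walk_append G (htw (G.init e)) ⟨rfl, walk_inv G (htw (G.term e))⟩
      exact walk_closed G hw
    · rw [List.map_append, List.map_cons, ← FreeGroup.mul_mk,
        show (ℓ e :: ((t (G.term e)).reverse.map G.inv).map ℓ) =
          [ℓ e] ++ ((t (G.term e)).reverse.map G.inv).map ℓ from rfl,
        ← FreeGroup.mul_mk, label_inv G ℓ hinv, mul_assoc]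
end
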